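/- No infinite connected graph is a forest graph: if G is connected and infinite, there is no graph H with F(H) isomorphic to G. -/

import Mathlib

open Cardinal

variable {V : Type*}

/-- `F` is a maximal forest of `G`: an acyclic subgraph of `G` maximal among
acyclic subgraphs of `G` under inclusion. -/
def IsMaximalForest (G F : SimpleGraph V) : Prop :=
  F ≤ G ∧ F.IsAcyclic ∧ ∀ F' : SimpleGraph V, F' ≤ G → F'.IsAcyclic → F ≤ F' → F' = F

/-- The forest graph of `G`: vertices are the maximal forests of `G`,
two adjacent iff they differ by exactly one edge. -/
def forestGraph (G : SimpleGraph V) :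
    SimpleGraph {F : SimpleGraph V // IsMaximalForest G F} where
  Adj F₁ F₂ := (F₁.1.edgeSet \ F₂.1.edgeSet).encard = 1 ∧
               (F₂.1.edgeSet \ F₁.1.edgeSet).encard = 1
  symm := ⟨fun F₁ F₂ h => ⟨h.2, h.1⟩⟩
  loopless := ⟨fun F h => by simp at h⟩

/-- The set of cycles of `G`, each cycle identified with its edge set. -/
def cycleSet (G : SimpleGraph V) : Set (Set (Sym2 V)) :=
  {s | ∃ (v : V) (c : G.Walk v v), c.IsCycle ∧ s = {e | e ∈ c.edges}}

section Helpers

open SimpleGraph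

lemma ForestProof.chain_edges {c : Set (SimpleGraph V)} (hchain : IsChain (· ≤ ·) c)
    (hne : c.Nonempty) {u v : V} (p : (sSup c).Walk u v) :
    ∃ F ∈ c, ∀ e ∈ p.edges, e ∈ F.edgeSet := by
  induction p with
  | nil => exact ⟨hne.choose, hne.choose_spec, by simp⟩
  | cons h q ih =>
    obtain ⟨F₁, hF₁, hadj⟩ := sSup_adj.mp h
    obtain ⟨F₂, hF₂, he₂⟩ := ih
    rcases hchain.total hF₁ hF₂ with hle | hle
    · refine ⟨F₂, hF₂, ?_⟩
      intro e he
      rw [SimpleGraph.Walk.edges_cons, List.mem_cons] at he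
      rcases he with rfl | he
      · exact (F₂.mem_edgeSet).mpr (hle hadj)
      · exact he₂ e he
    · refine ⟨F₁, hF₁, ?_⟩
      intro e he
      rw [SimpleGraph.Walk.edges_cons, List.mem_cons] at he
      rcases he with rfl | he
      · exact (F₁.mem_edgeSet).mpr hadj
      · exact edgeSet_mono hle (he₂ e he)

lemma ForestProof.exists_maximalForest (H S : SimpleGraph V) (hS : S ≤ H) (hSa : S.IsAcyclic) :
    ∃ F, IsMaximalForest H F ∧ S ≤ F := by
  have hz : ∀ c ⊆ {F' : SimpleGraph V | F' ≤ H ∧ F'.IsAcyclic}, IsChain (· ≤ ·) c →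
      ∀ y ∈ c, ∃ ub ∈ {F' : SimpleGraph V | F' ≤ H ∧ F'.IsAcyclic}, ∀ z ∈ c, z ≤ ub := by
    intro c hc hchain y hy
    refine ⟨sSup c, ⟨sSup_le fun F hF => (hc hF).1, ?_⟩, fun z hz => le_sSup hz⟩
    intro v p hp
    obtain ⟨F, hF, hFe⟩ := ForestProof.chain_edges hchain ⟨y, hy⟩ p
    exact (hc hF).2 _ (hp.transfer hFe)
  obtain ⟨m, hxm, hm⟩ := zorn_le_nonempty₀ _ hz S ⟨hS, hSa⟩
  exact ⟨m, ⟨hm.1.1, hm.1.2, fun F' h1 h2 h3 => le_antisymm (hm.2 ⟨h1, h2⟩ h3) h3⟩, hxm⟩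

lemma ForestProof.bot_isAcyclic : (⊥ : SimpleGraph V).IsAcyclic := by
  intro v p hp
  cases p with
  | nil => simp [SimpleGraph.Walk.isCycle_def] at hp
  | cons h q => simp at h

lemma ForestProof.acyclic_sup_edge {F : SimpleGraph V} (hF : F.IsAcyclic) {u v : V}
    (hr : ¬ F.Reachable u v) : (F ⊔ fromEdgeSet {s(u, v)}).IsAcyclic := by
  intro a p hp
  by_cases he : s(u, v) ∈ p.edges
  · have hcyc := (adj_and_reachable_delete_edges_iff_exists_cycle
      (G := F ⊔ fromEdgeSet {s(u, v)})).mpr ⟨a, p, hp, he⟩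
    apply hr
    refine hcyc.2.mono ?_
    intro x y hxy
    rw [deleteEdges_adj] at hxy
    rcases (sup_adj _ _ _ _).mp hxy.1 with h | h
    · exact h
    · exact absurd ((fromEdgeSet_adj _).mp h).1 hxy.2
  · have hsub : ∀ e ∈ p.edges, e ∈ F.edgeSet := by
      intro e hep
      have h1 := p.edges_subset_edgeSet hep
      rw [edgeSet_sup, edgeSet_fromEdgeSet] at h1
      rcases h1 with h1 | h1
      · exact h1
      · rw [Set.mem_diff, Set.mem_singleton_iff] at h1
        exact absurd (h1.1 ▸ hep) he
    exact hF _ (hp.transfer hsub)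

lemma ForestProof.reachable_of_maximal {H F : SimpleGraph V} (hF : IsMaximalForest H F)
    {u v : V} (h : H.Adj u v) : F.Reachable u v := by
  by_contra hr
  have hne := h.ne
  have hacyc := ForestProof.acyclic_sup_edge hF.2.1 hr
  have hle : F ⊔ fromEdgeSet {s(u, v)} ≤ H := by
    refine sup_le hF.1 ?_
    intro x y hxy
    rw [fromEdgeSet_adj, Set.mem_singleton_iff, Sym2.eq_iff] at hxy
    rcases hxy.1 with ⟨rfl, rfl⟩ | ⟨rfl, rfl⟩
    · exact h
    · exact h.symm
  have heq := hF.2.2 _ hle hacyc le_sup_left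
  apply hr
  have hadj : F.Adj u v := by
    rw [← heq]
    exact (sup_adj _ _ _ _).mpr (Or.inr ((fromEdgeSet_adj _).mpr ⟨rfl, hne⟩))
  exact hadj.reachable

lemma ForestProof.exists_cross_edge {F F' : SimpleGraph V} {u v : V} (p : F.Walk u v)
    (h : ¬ F'.Reachable u v) :
    ∃ x y : V, F.Adj x y ∧ s(x, y) ∈ p.edges ∧ ¬ F'.Reachable x y := by
  induction p with
  | nil => exact absurd (Reachable.refl _) h
  | @cons a b c hadj q ih =>
    by_cases hx : F'.Reachable a b
    · obtain ⟨x, y, h1, h2, h3⟩ := ih fun hr => h (hx.trans hr)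
      exact ⟨x, y, h1, by simp [h2], h3⟩
    · exact ⟨a, b, hadj, by simp, hx⟩

lemma ForestProof.reachable_ne_exists_adj {F : SimpleGraph V} {a b : V} (h : F.Reachable a b)
    (hne : a ≠ b) : ∃ w, F.Adj a w := by
  obtain ⟨p⟩ := h
  cases p with
  | nil => exact absurd rfl hne
  | cons h _ => exact ⟨_, h⟩

lemma ForestProof.walk_diff_finite {W : Type*} {H : SimpleGraph W}
    {F₁ F₂ : {F : SimpleGraph W // IsMaximalForest H F}} (p : (forestGraph H).Walk F₁ F₂) :
    (F₂.1.edgeSet \ F₁.1.edgeSet).Finite ∧ (F₁.1.edgeSet \ F₂.1.edgeSet).Finite := by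
  induction p with
  | nil => simp
  | @cons a b c hadj q ih =>
    have h1 : (b.1.edgeSet \ a.1.edgeSet).Finite := by
      obtain ⟨x, hx⟩ := Set.encard_eq_one.mp hadj.2
      rw [hx]; exact Set.finite_singleton x
    have h2 : (a.1.edgeSet \ b.1.edgeSet).Finite := by
      obtain ⟨x, hx⟩ := Set.encard_eq_one.mp hadj.1
      rw [hx]; exact Set.finite_singleton x
    constructor
    · refine ((ih.1.union h1).subset ?_)
      intro e he
      by_cases hb : e ∈ b.1.edgeSet
      · exact Or.inr ⟨hb, he.2⟩
      · exact Or.inl ⟨he.1, hb⟩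
    · refine ((h2.union ih.2).subset ?_)
      intro e he
      by_cases hb : e ∈ b.1.edgeSet
      · exact Or.inr ⟨hb, he.2⟩
      · exact Or.inl ⟨he.1, hb⟩

end Helpers

/-- No infinite connected graph is a forest graph. -/
theorem infinite_connected_no_root {W : Type*} (G : SimpleGraph V)
    (hconn : G.Connected) (hinf : Infinite V) (H : SimpleGraph W) :
    ¬ Nonempty (forestGraph H ≃g G) := by
  classical
  open SimpleGraph in
  rintro ⟨e⟩
  haveI : Infinite {F : SimpleGraph W // IsMaximalForest H F} := e.toEquiv.infinite_iff.mpr hinf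
  have hFconn : (forestGraph H).Connected := e.connected_iff.mpr hconn
  obtain ⟨F₀⟩ := hFconn.nonempty
  have hfin : ∀ F : {F : SimpleGraph W // IsMaximalForest H F},
      (F.1.edgeSet \ F₀.1.edgeSet).Finite ∧ (F₀.1.edgeSet \ F.1.edgeSet).Finite := by
    intro F
    obtain ⟨p⟩ := hFconn.preconnected F₀ F
    exact ForestProof.walk_diff_finite p
  set K : Set (Sym2 W) := H.edgeSet \ F₀.1.edgeSet with hKdef
  by_cases hK : K.Finite
  · -- Case B : finitely many maximal forests, contradiction with Infinite
    have hQ : ∀ f ∈ K, ∃ Q : Set (Sym2 W), Q.Finite ∧ ∀ e : Sym2 W, e ∉ Q →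
        ∀ x y : W, f = s(x, y) → (F₀.1 \ fromEdgeSet {e}).Reachable x y := by
      intro f hf
      induction f using Sym2.ind with
      | _ a b =>
        have hadj : H.Adj a b := (H.mem_edgeSet).mp hf.1
        obtain ⟨p⟩ := ForestProof.reachable_of_maximal F₀.2 hadj
        refine ⟨{e | e ∈ p.edges}, p.edges.finite_toSet, ?_⟩
        intro e he x y hxy
        have hsub : ∀ e' ∈ p.edges, e' ∈ (F₀.1 \ fromEdgeSet {e}).edgeSet := by
          intro e' he'
          rw [edgeSet_sdiff, edgeSet_fromEdgeSet]
          refine ⟨p.edges_subset_edgeSet he', fun hmem => he (hmem.1 ▸ he')⟩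
        have hreach : (F₀.1 \ fromEdgeSet {e}).Reachable a b := ⟨p.transfer _ hsub⟩
        rcases Sym2.eq_iff.mp hxy with ⟨rfl, rfl⟩ | ⟨rfl, rfl⟩
        · exact hreach
        · exact hreach.symm
    choose! Q hQfin hQr using hQ
    set Es : Set (Sym2 W) := K ∪ ⋃ f ∈ K, Q f with hEs
    have hEsfin : Es.Finite := hK.union (hK.biUnion fun f hf => hQfin f hf)
    have hKEs : K ⊆ Es := Set.subset_union_left
    have hdiff1 : ∀ F : {F : SimpleGraph W // IsMaximalForest H F},
        F.1.edgeSet \ F₀.1.edgeSet ⊆ K := by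
      intro F f hf
      exact ⟨edgeSet_mono F.2.1 hf.1, hf.2⟩
    have hdiff2 : ∀ F : {F : SimpleGraph W // IsMaximalForest H F},
        F₀.1.edgeSet \ F.1.edgeSet ⊆ Es := by
      intro F f
      induction f using Sym2.ind with
      | _ u v =>
        intro hf
        have hadjH : H.Adj u v := (H.mem_edgeSet).mp (edgeSet_mono F₀.2.1 hf.1)
        have hFr : F.1.Reachable u v := ForestProof.reachable_of_maximal F.2 hadjH
        have hnR : ¬ (F₀.1 \ fromEdgeSet {s(u, v)}).Reachable u v := by
          intro hR
          obtain ⟨w, q, hq, -⟩ := (adj_and_reachable_delete_edges_iff_exists_cycle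
            (G := F₀.1)).mp ⟨(F₀.1.mem_edgeSet).mp hf.1, hR⟩
          exact F₀.2.2.1 _ hq
        obtain ⟨p⟩ := hFr
        obtain ⟨x, y, hxy, hmem, hnRxy⟩ := ForestProof.exists_cross_edge p hnR
        by_cases hxyF0 : s(x, y) ∈ F₀.1.edgeSet
        · exfalso
          apply hnRxy
          have hadj' : (F₀.1 \ fromEdgeSet {s(u, v)}).Adj x y := by
            rw [sdiff_adj]
            refine ⟨(F₀.1.mem_edgeSet).mp hxyF0, fun hc => ?_⟩
            rw [fromEdgeSet_adj, Set.mem_singleton_iff] at hc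
            exact hf.2 (hc.1 ▸ ((F.1.mem_edgeSet).mpr hxy))
          exact hadj'.reachable
        · have hfK : s(x, y) ∈ K :=
            ⟨edgeSet_mono F.2.1 ((F.1.mem_edgeSet).mpr hxy), hxyF0⟩
          by_cases hin : s(u, v) ∈ Q s(x, y)
          · exact Or.inr (Set.mem_biUnion hfK hin)
          · exact absurd (hQr _ hfK _ hin x y rfl) hnRxy
    have key : ∀ F : {F : SimpleGraph W // IsMaximalForest H F},
        F.1.edgeSet = (F.1.edgeSet ∩ Es) ∪ (F₀.1.edgeSet \ Es) := by
      intro F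
      ext f
      constructor
      · intro hfF
        by_cases hfE : f ∈ Es
        · exact Or.inl ⟨hfF, hfE⟩
        · refine Or.inr ⟨?_, hfE⟩
          by_contra hf0
          exact hfE (hKEs (hdiff1 F ⟨hfF, hf0⟩))
      · rintro (⟨hfF, -⟩ | ⟨hf0, hfE⟩)
        · exact hfF
        · by_contra hfF
          exact hfE (hdiff2 F ⟨hf0, hfF⟩)
    have hinj : Function.Injective
        (fun F : {F : SimpleGraph W // IsMaximalForest H F} =>
          (⟨F.1.edgeSet ∩ Es, Set.inter_subset_right⟩ : {t : Set (Sym2 W) // t ⊆ Es})) := by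
      intro F F' h
      have h2 : F.1.edgeSet ∩ Es = F'.1.edgeSet ∩ Es := congrArg Subtype.val h
      have h3 : F.1.edgeSet = F'.1.edgeSet := by rw [key F, key F', h2]
      exact Subtype.ext (edgeSet_inj.mp h3)
    haveI : Finite {t : Set (Sym2 W) // t ⊆ Es} := hEsfin.finite_subsets.to_subtype
    haveI := Finite.of_injective _ hinj
    exact not_finite {F : SimpleGraph W // IsMaximalForest H F}
  · -- Case A : K infinite, build a maximal forest at infinite distance
    set H' : SimpleGraph W := fromEdgeSet K with hH'
    have hH'le : H' ≤ H := by
      intro x y hxy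
      rw [hH', fromEdgeSet_adj] at hxy
      exact (H.mem_edgeSet).mp hxy.1.1
    obtain ⟨F₁, hF₁max, -⟩ := ForestProof.exists_maximalForest H' ⊥ bot_le
      ForestProof.bot_isAcyclic
    have hF₁K : F₁.edgeSet ⊆ K := by
      intro f hf
      have := edgeSet_mono hF₁max.1 hf
      rw [hH', edgeSet_fromEdgeSet] at this
      exact this.1
    have hF₁inf : F₁.edgeSet.Infinite := by
      intro hfin1
      apply hK
      have hpair : ∀ e : Sym2 W, ({x | x ∈ e} : Set W).Finite := by
        intro e
        induction e using Sym2.ind with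
        | _ a b =>
          have : ({x | x ∈ s(a, b)} : Set W) = {a, b} := by
            ext z; simp [Sym2.mem_iff]
          rw [this]; exact (Set.finite_singleton a).insert b |>.subset (by intro z; simp; tauto)
      have hVs : (⋃ e ∈ F₁.edgeSet, {x | x ∈ e} : Set W).Finite :=
        hfin1.biUnion fun e _ => hpair e
      set Vs := (⋃ e ∈ F₁.edgeSet, {x | x ∈ e} : Set W) with hVsdef
      have hsub : K ⊆ (fun p : W × W => s(p.1, p.2)) '' (Vs ×ˢ Vs) := by
        intro f
        induction f using Sym2.ind with
        | _ x y =>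
          intro hf
          have hne : x ≠ y := by
            intro hxy
            exact H.not_isDiag_of_mem_edgeSet hf.1 (by rw [hxy]; exact Sym2.mk_isDiag_iff.mpr rfl)
          have hadj' : H'.Adj x y := by
            rw [hH', fromEdgeSet_adj]; exact ⟨hf, hne⟩
          have hr := ForestProof.reachable_of_maximal hF₁max hadj'
          obtain ⟨w1, hw1⟩ := ForestProof.reachable_ne_exists_adj hr hne
          obtain ⟨w2, hw2⟩ := ForestProof.reachable_ne_exists_adj hr.symm (Ne.symm hne)
          refine ⟨(x, y), ⟨?_, ?_⟩, rfl⟩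
          · exact Set.mem_biUnion ((F₁.mem_edgeSet).mpr hw1) (Sym2.mem_mk_left x w1)
          · exact Set.mem_biUnion ((F₁.mem_edgeSet).mpr hw2) (Sym2.mem_mk_left y w2)
      exact ((hVs.prod hVs).image _).subset hsub
    obtain ⟨F₂, hF₂max, hle12⟩ := ForestProof.exists_maximalForest H F₁
      (hF₁max.1.trans hH'le) hF₁max.2.1
    have hsub2 : F₁.edgeSet ⊆ F₂.edgeSet \ F₀.1.edgeSet := by
      intro f hf
      exact ⟨edgeSet_mono hle12 hf, (hF₁K hf).2⟩
    exact (hfin ⟨F₂, hF₂max⟩).1.not_infinite (hF₁inf.mono hsub2)
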